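/- (Applicative functor laws) Step functions with pure := const and ap := @ form an applicative functor up to the equivalence ≍: for all types X, Y, Z, all v : S X, u : S (X → Y), w : S X, uu : S (Y → Z), and all f : X → Y, x : X, y : X, the following hold: (Identity) const id @ v ≍ v; (Composition) const (fun g h a => g (h a)) @ uu @ u @ w ≍ uu @ (u @ w); (Homomorphism) const f @ const x ≍ const (f x); (Interchange) u @ const y ≍ const (fun g => g y) @ u; in each case ≍ is the lifted equality relation on step functions of the appropriate value type. -/

import Mathlib

set_option linter.unusedVariables false

/-- Rationals strictly between 0 and 1. -/
abbrev OO : Type := {q : ℚ // 0 < q ∧ q < 1}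

/-- Rational step functions on the unit interval with values in `X`. -/
inductive S (X : Type) : Type
  | const : X → S X
  | glue : OO → S X → S X → S X

namespace S

def divO (a o : OO) (h : a.1 < o.1) : OO :=
  ⟨a.1 / o.1, div_pos a.2.1 o.2.1, (div_lt_one o.2.1).2 h⟩

def subO (a o : OO) (h : o.1 < a.1) : OO :=
  ⟨(a.1 - o.1) / (1 - o.1),
    div_pos (by linarith) (by linarith [o.2.2]),
    (div_lt_one (by linarith [o.2.2])).2 (by linarith [a.2.2])⟩

/-- Left split: the part of the step function on `[0,a]`, rescaled to `[0,1]`. -/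
def splitL {X : Type} : S X → OO → S X
  | const x, _ => const x
  | glue o f g, a =>
      if h : a.1 < o.1 then splitL f (divO a o h)
      else if h' : o.1 < a.1 then glue (divO o a h') f (splitL g (subO a o h'))
      else f

/-- Right split: the part of the step function on `[a,1]`, rescaled to `[0,1]`. -/
def splitR {X : Type} : S X → OO → S X
  | const x, _ => const x
  | glue o f g, a =>
      if h : a.1 < o.1 then glue (subO o a h) (splitR f (divO a o h)) g
      else if h' : o.1 < a.1 then splitR g (subO a o h')
      else g

/-- The catamorphism (fold) for step functions. -/
def fold {X Y : Type} (φ : X → Y) (ψ : OO → Y → Y → Y) : S X → Y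
  | const x => φ x
  | glue o f g => ψ o (fold φ ψ f) (fold φ ψ g)

/-- `map` for step functions. -/
def mapS {X Y : Type} (f : X → Y) : S X → S Y
  | const x => const (f x)
  | glue o l r => glue o (mapS f l) (mapS f r)

/-- The applicative `ap` (pointwise application) for step functions. -/
def ap {X Y : Type} : S (X → Y) → S X → S Y
  | const f, x => mapS f x
  | glue o fl fr, x => glue o (ap fl (splitL x o)) (ap fr (splitR x o))

/-- Binary map. -/
def map2 {X Y Z : Type} (f : X → Y → Z) (a : S X) (b : S Y) : S Z :=
  ap (mapS f a) b

/-- `fold⋆`: a step function of propositions holds everywhere. -/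
def foldStar : S Prop → Prop := fold id (fun _ p q => p ∧ q)

/-- Lifting of a relation to step functions: it holds pointwise everywhere. -/
def liftRel {X Y : Type} (R : X → Y → Prop) (f : S X) (g : S Y) : Prop :=
  foldStar (map2 R f g)

/-- The equivalence `≍` on step functions: the lifting of equality. -/
def equivS {X : Type} (f g : S X) : Prop := liftRel Eq f g

def foldSup : S ℚ → ℚ := fold id (fun _ x y => max x y)

def foldAffine : S ℚ → ℚ := fold id (fun o x y => o.1 * x + (1 - o.1) * y)

def normInf (f : S ℚ) : ℚ := foldSup (mapS (fun q => |q|) f)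

def normOne (f : S ℚ) : ℚ := foldAffine (mapS (fun q => |q|) f)

def dInf (f g : S ℚ) : ℚ := normInf (map2 (· - ·) f g)

def dOne (f g : S ℚ) : ℚ := normOne (map2 (· - ·) f g)

/-- Evaluation of a step function at a rational point. -/
def eval {X : Type} : S X → ℚ → X
  | const x, _ => x
  | glue o f g, q => if q < o.1 then eval f (q / o.1) else eval g ((q - o.1) / (1 - o.1))

theorem eval_splitL {X : Type} : ∀ (x : S X) (a : OO) (q : ℚ), 0 ≤ q → q < 1 →
    eval (splitL x a) q = eval x (q * a.1)
  | const x, a, q, _, _ => rfl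
  | glue o f g, a, q, hq0, hq1 => by
    have ho0 := o.2.1; have ho1 := o.2.2
    have ha0 := a.2.1; have ha1 := a.2.2
    rcases lt_trichotomy a.1 o.1 with h | h | h
    · rw [splitL, dif_pos h, eval_splitL f _ q hq0 hq1]
      rw [show eval (glue o f g) (q * a.1) = if q * a.1 < o.1 then eval f (q * a.1 / o.1)
          else eval g ((q * a.1 - o.1) / (1 - o.1)) from rfl, if_pos (by nlinarith)]
      congr 1
      show q * (a.1 / o.1) = q * a.1 / o.1
      ring
    · rw [splitL, dif_neg (by rw [h]; exact lt_irrefl _), dif_neg (by rw [h]; exact lt_irrefl _)]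
      rw [show eval (glue o f g) (q * a.1) = if q * a.1 < o.1 then eval f (q * a.1 / o.1)
          else eval g ((q * a.1 - o.1) / (1 - o.1)) from rfl, if_pos (by nlinarith)]
      congr 1
      rw [← h, mul_div_cancel_right₀ _ (ne_of_gt ha0)]
    · rw [splitL, dif_neg (not_lt.2 h.le), dif_pos h]
      rw [show eval (glue (divO o a h) f (splitL g (subO a o h))) q =
          if q < o.1 / a.1 then eval f (q / (o.1 / a.1))
          else eval (splitL g (subO a o h)) ((q - o.1 / a.1) / (1 - o.1 / a.1)) from rfl]
      rw [show eval (glue o f g) (q * a.1) = if q * a.1 < o.1 then eval f (q * a.1 / o.1)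
          else eval g ((q * a.1 - o.1) / (1 - o.1) ) from rfl]
      by_cases hc : q < o.1 / a.1
      · rw [if_pos hc, if_pos (by rw [lt_div_iff₀ ha0] at hc; linarith)]
        congr 1
        field_simp
      · push_neg at hc
        have hc' : o.1 ≤ q * a.1 := by rw [div_le_iff₀ ha0] at hc; linarith
        have hoa : o.1 / a.1 < 1 := (div_lt_one ha0).2 h
        rw [if_neg (not_lt.2 hc), if_neg (not_lt.2 hc')]
        rw [eval_splitL g _ _ (div_nonneg (sub_nonneg.2 hc) (by linarith))
          (by rw [div_lt_one (by linarith)]; linarith)]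
        congr 1
        show (q - o.1 / a.1) / (1 - o.1 / a.1) * ((a.1 - o.1) / (1 - o.1)) =
          (q * a.1 - o.1) / (1 - o.1)
        have h1 : (1 : ℚ) - o.1 / a.1 = (a.1 - o.1) / a.1 := by field_simp
        rw [h1, div_div_eq_mul_div]
        have e1 : a.1 - o.1 ≠ 0 := by linarith
        have e2 : (1:ℚ) - o.1 ≠ 0 := by linarith
        field_simp
    termination_by x => sizeOf x

theorem eval_splitR {X : Type} : ∀ (x : S X) (a : OO) (q : ℚ), 0 ≤ q → q < 1 →
    eval (splitR x a) q = eval x (a.1 + q * (1 - a.1))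
  | const x, a, q, _, _ => rfl
  | glue o f g, a, q, hq0, hq1 => by
    have ho0 := o.2.1; have ho1 := o.2.2
    have ha0 := a.2.1; have ha1 := a.2.2
    rw [show eval (glue o f g) (a.1 + q * (1 - a.1)) =
        if a.1 + q * (1 - a.1) < o.1 then eval f ((a.1 + q * (1 - a.1)) / o.1)
        else eval g ((a.1 + q * (1 - a.1) - o.1) / (1 - o.1)) from rfl]
    rcases lt_trichotomy a.1 o.1 with h | h | h
    · rw [splitR, dif_pos h]
      rw [show eval (glue (subO o a h) (splitR f (divO a o h)) g) q =
          if q < (o.1 - a.1) / (1 - a.1) then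
            eval (splitR f (divO a o h)) (q / ((o.1 - a.1) / (1 - a.1)))
          else eval g ((q - (o.1 - a.1) / (1 - a.1)) / (1 - (o.1 - a.1) / (1 - a.1))) from rfl]
      by_cases hc : q < (o.1 - a.1) / (1 - a.1)
      · have hc' : q * (1 - a.1) < o.1 - a.1 := by rw [lt_div_iff₀ (by linarith)] at hc; linarith
        have hd : (0:ℚ) < (o.1 - a.1) / (1 - a.1) := div_pos (by linarith) (by linarith)
        rw [if_pos hc, if_pos (by nlinarith)]
        rw [eval_splitR f _ _ (div_nonneg hq0 hd.le) ((div_lt_one hd).2 hc)]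
        congr 1
        show a.1 / o.1 + q / ((o.1 - a.1) / (1 - a.1)) * (1 - a.1 / o.1) =
          (a.1 + q * (1 - a.1)) / o.1
        rw [div_div_eq_mul_div]
        have e1 : o.1 - a.1 ≠ 0 := by linarith
        have e2 : (1:ℚ) - a.1 ≠ 0 := by linarith
        field_simp
      · rw [if_neg hc, if_neg (by push_neg at hc ⊢; rw [div_le_iff₀ (by linarith)] at hc; nlinarith)]
        congr 1
        have e2 : (1:ℚ) - a.1 ≠ 0 := by linarith
        have e3 : (1:ℚ) - o.1 ≠ 0 := by linarith
        have h1 : (1 : ℚ) - (o.1 - a.1) / (1 - a.1) = (1 - o.1) / (1 - a.1) := by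
          field_simp
          ring
        rw [h1, div_div_eq_mul_div]
        field_simp
        ring
    · rw [splitR, dif_neg (by rw [h]; exact lt_irrefl _), dif_neg (by rw [h]; exact lt_irrefl _)]
      rw [if_neg (by rw [← h]; nlinarith)]
      congr 1
      rw [← h]
      rw [add_sub_cancel_left, mul_div_cancel_right₀ _ (by linarith : (1:ℚ) - a.1 ≠ 0)]
    · rw [splitR, dif_neg (not_lt.2 h.le), dif_pos h]
      rw [eval_splitR g _ _ hq0 hq1, if_neg (by nlinarith)]
      congr 1
      show (a.1 - o.1) / (1 - o.1) + q * (1 - (a.1 - o.1) / (1 - o.1)) =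
        (a.1 + q * (1 - a.1) - o.1) / (1 - o.1)
      have e3 : (1:ℚ) - o.1 ≠ 0 := by linarith
      have h1 : (1 : ℚ) - (a.1 - o.1) / (1 - o.1) = (1 - a.1) / (1 - o.1) := by
        field_simp
        ring
      rw [h1]
      field_simp
      ring
    termination_by x => sizeOf x

theorem eval_mapS {X Y : Type} (f : X → Y) : ∀ (x : S X) (q : ℚ),
    eval (mapS f x) q = f (eval x q)
  | const x, q => rfl
  | glue o l r, q => by
    rw [mapS]
    rw [show eval (glue o (mapS f l) (mapS f r)) q = if q < o.1 then eval (mapS f l) (q / o.1)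
        else eval (mapS f r) ((q - o.1) / (1 - o.1)) from rfl]
    rw [show eval (glue o l r) q = if q < o.1 then eval l (q / o.1)
        else eval r ((q - o.1) / (1 - o.1)) from rfl]
    split_ifs <;> rw [eval_mapS]

theorem eval_ap {X Y : Type} : ∀ (F : S (X → Y)) (x : S X) (q : ℚ), 0 ≤ q → q < 1 →
    eval (ap F x) q = eval F q (eval x q)
  | const f, x, q, _, _ => by rw [ap, eval_mapS]; rfl
  | glue o fl fr, x, q, h0, h1 => by
    have ho0 := o.2.1; have ho1 := o.2.2
    rw [ap]
    rw [show eval (glue o (ap fl (splitL x o)) (ap fr (splitR x o))) q =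
        if q < o.1 then eval (ap fl (splitL x o)) (q / o.1)
        else eval (ap fr (splitR x o)) ((q - o.1) / (1 - o.1)) from rfl]
    rw [show eval (glue o fl fr) q = if q < o.1 then eval fl (q / o.1)
        else eval fr ((q - o.1) / (1 - o.1)) from rfl]
    by_cases hc : q < o.1
    · rw [if_pos hc, if_pos hc,
        eval_ap fl _ _ (by positivity) ((div_lt_one ho0).2 hc),
        eval_splitL x o _ (by positivity) ((div_lt_one ho0).2 hc),
        div_mul_cancel₀ _ (ne_of_gt ho0)]
    · push_neg at hc
      rw [if_neg (not_lt.2 hc), if_neg (not_lt.2 hc),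
        eval_ap fr _ _ (div_nonneg (sub_nonneg.2 hc) (by linarith))
          (by rw [div_lt_one (by linarith)]; linarith),
        eval_splitR x o _ (div_nonneg (sub_nonneg.2 hc) (by linarith))
          (by rw [div_lt_one (by linarith)]; linarith)]
      congr 1
      rw [div_mul_cancel₀ _ (by linarith : (1:ℚ) - o.1 ≠ 0)]
      ring
    termination_by F => sizeOf F

theorem foldStar_iff : ∀ s : S Prop, foldStar s ↔ ∀ q : ℚ, 0 ≤ q → q < 1 → eval s q
  | const P => by
    constructor
    · intro h q _ _; exact h
    · intro h; exact h 0 le_rfl one_pos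
  | glue o p r => by
    have ho0 := o.2.1; have ho1 := o.2.2
    have hp := foldStar_iff p
    have hr := foldStar_iff r
    show foldStar p ∧ foldStar r ↔ _
    rw [hp, hr]
    constructor
    · rintro ⟨h1, h2⟩ q hq0 hq1
      rw [show eval (glue o p r) q = if q < o.1 then eval p (q / o.1)
          else eval r ((q - o.1) / (1 - o.1)) from rfl]
      split_ifs with h
      · exact h1 _ (by positivity) ((div_lt_one ho0).2 h)
      · push_neg at h
        exact h2 _ (div_nonneg (sub_nonneg.2 h) (by linarith)) (by rw [div_lt_one (by linarith)]; linarith)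
    · intro h
      constructor
      · intro q hq0 hq1
        have := h (q * o.1) (by positivity) (by nlinarith)
        rw [show eval (glue o p r) (q * o.1) = if q * o.1 < o.1 then eval p (q * o.1 / o.1)
            else eval r ((q * o.1 - o.1) / (1 - o.1)) from rfl,
          if_pos (by nlinarith), mul_div_cancel_right₀ _ (ne_of_gt ho0)] at this
        exact this
      · intro q hq0 hq1
        have := h (o.1 + q * (1 - o.1)) (by nlinarith) (by nlinarith)
        rw [show eval (glue o p r) (o.1 + q * (1 - o.1)) =
            if o.1 + q * (1 - o.1) < o.1 then eval p ((o.1 + q * (1 - o.1)) / o.1)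
            else eval r ((o.1 + q * (1 - o.1) - o.1) / (1 - o.1)) from rfl,
          if_neg (by nlinarith), add_sub_cancel_left,
          mul_div_cancel_right₀ _ (by linarith : (1:ℚ) - o.1 ≠ 0)] at this
        exact this

theorem equivS_iff {X : Type} (f g : S X) :
    equivS f g ↔ ∀ q : ℚ, 0 ≤ q → q < 1 → eval f q = eval g q := by
  unfold equivS liftRel map2
  rw [foldStar_iff]
  have key : ∀ q : ℚ, 0 ≤ q → q < 1 →
      eval (ap (mapS Eq f) g) q = (eval f q = eval g q) := by
    intro q h0 h1
    rw [eval_ap _ _ _ h0 h1, eval_mapS]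
  constructor
  · intro h q h0 h1; have := h q h0 h1; rwa [key q h0 h1] at this
  · intro h q h0 h1; rw [key q h0 h1]; exact h q h0 h1

end S

open S

/-- The applicative functor laws for step functions, up to the lifted equality. -/
theorem step_applicative_laws {X Y Z : Type} (v : S X) (u : S (X → Y)) (w : S X)
    (uu : S (Y → Z)) (f : X → Y) (x y : X) :
    equivS (ap (S.const (id : X → X)) v) v ∧
    equivS
      (ap (ap (ap (S.const (fun (g : Y → Z) (h : X → Y) (a : X) => g (h a))) uu) u) w)
      (ap uu (ap u w)) ∧
    equivS (ap (S.const f) (S.const x)) (S.const (f x)) ∧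
    equivS (ap u (S.const y)) (ap (S.const (fun g : X → Y => g y)) u) := by
  refine ⟨?_, ?_, ?_, ?_⟩
  · rw [equivS_iff]
    intro q h0 h1
    rw [eval_ap _ _ _ h0 h1]
    rfl
  · rw [equivS_iff]
    intro q h0 h1
    rw [eval_ap _ _ _ h0 h1, eval_ap _ _ _ h0 h1, eval_ap _ _ _ h0 h1,
      eval_ap _ _ _ h0 h1, eval_ap _ _ _ h0 h1]
    rfl
  · rw [equivS_iff]
    intro q h0 h1
    rw [eval_ap _ _ _ h0 h1]
    rfl
  · rw [equivS_iff]
    intro q h0 h1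
    rw [eval_ap _ _ _ h0 h1, eval_ap _ _ _ h0 h1]
    rfl
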